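/- Fix γ ∈ (0, 1/2) and 0 ≤ ζ0 < γ. Suppose the measurable classifier ĥ : X → {+1, −1, ⊥} enjoys proper abstention, i.e., {x : ĥ(x) = ⊥} ⊆ {x : |η(x) − 1/2| ≤ γ}, and define X_{ζ0,γ} := {x ∈ X : ζ0 < |η(x) − 1/2| ≤ γ}. Then the randomized version č satisfies err(č) − err(h⋆) ≤ γ·P_{x∼D_X}(x ∈ X_{ζ0,γ}) + ζ0 + E_{x∼D_X}[1(ĥ(x) ≠ ⊥)·(1(ĥ(x) = +1)·(1 − η(x)) + 1(ĥ(x) = −1)·η(x) − min(η(x), 1 − η(x)))]. -/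

import Mathlib

open MeasureTheory

/-- Three-term decomposition of the standard excess error under proper abstention
(the key step in handling the noise-seeking noise conditions).  For a measurable
classifier `h : X → {+1, -1, ⊥}` (encoded as `Option Bool`) whose abstention region is
contained in `{x | |η x - 1/2| ≤ γ}`, with `X_{ζ₀,γ} = {x | ζ₀ < |η x - 1/2| ≤ γ}`, the
randomized version `č` satisfies
`err(č) - err(h⋆) ≤ γ·P(X_{ζ₀,γ}) + ζ₀ + E[1(h ≠ ⊥)·(misclass prob of h - Bayes)]`. -/
theorem stmt_17 {X : Type*} [MeasurableSpace X] (μ : Measure X) [IsProbabilityMeasure μ]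
    (η : X → ℝ) (hη : Measurable η) (hη01 : ∀ x, η x ∈ Set.Icc (0 : ℝ) 1)
    (h : X → Option Bool)
    (hnone : MeasurableSet {x | h x = none})
    (htrue : MeasurableSet {x | h x = some true})
    (γ ζ₀ : ℝ) (hγ0 : 0 < γ) (hγ : γ < 1 / 2) (hζ0 : 0 ≤ ζ₀) (hζγ : ζ₀ < γ)
    (hproper : {x | h x = none} ⊆ {x | |η x - 1 / 2| ≤ γ}) :
    (∫ x, (h x).elim (1 / 2 : ℝ) (fun b => if b then 1 - η x else η x) ∂μ)
        - (∫ x, min (η x) (1 - η x) ∂μ)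
      ≤ γ * (μ {x | ζ₀ < |η x - 1 / 2| ∧ |η x - 1 / 2| ≤ γ}).toReal + ζ₀
        + ∫ x, (h x).elim (0 : ℝ)
            (fun b => (if b then 1 - η x else η x) - min (η x) (1 - η x)) ∂μ := by
  set A : Set X := {x | ζ₀ < |η x - 1 / 2| ∧ |η x - 1 / 2| ≤ γ} with hA
  set g : X → ℝ := fun x => (h x).elim (1 / 2 : ℝ) (fun b => if b then 1 - η x else η x)
    with hg
  set m : X → ℝ := fun x => min (η x) (1 - η x) with hm
  set e : X → ℝ := fun x => (h x).elim (0 : ℝ)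
    (fun b => (if b then 1 - η x else η x) - min (η x) (1 - η x)) with he
  have hAmeas : MeasurableSet A := by
    have : Measurable fun x => |η x - 1 / 2| := (hη.sub measurable_const).abs
    exact (measurableSet_lt measurable_const this).inter
      (measurableSet_le this measurable_const)
  -- rewrite g, e as if-then-else to get measurability
  have hgeq : g = fun x => if h x = none then (1 / 2 : ℝ)
      else if h x = some true then 1 - η x else η x := by
    funext x
    rcases hx : h x with _ | b
    · simp [hg, hx]
    · rcases b <;> simp [hg, hx]
  have heeq : e = fun x => if h x = none then (0 : ℝ)
      else if h x = some true then 1 - η x - min (η x) (1 - η x)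
      else η x - min (η x) (1 - η x) := by
    funext x
    rcases hx : h x with _ | b
    · simp [he, hx]
    · rcases b <;> simp [he, hx]
  have hmmeas : Measurable m := hη.min (measurable_const.sub hη)
  have hgmeas : Measurable g := by
    rw [hgeq]
    exact Measurable.ite hnone measurable_const
      (Measurable.ite htrue (measurable_const.sub hη) hη)
  have hemeas : Measurable e := by
    rw [heeq]
    exact Measurable.ite hnone measurable_const
      (Measurable.ite htrue ((measurable_const.sub hη).sub hmmeas) (hη.sub hmmeas))
  have hbound : ∀ (f : X → ℝ), Measurable f → (∀ x, |f x| ≤ 2) → Integrable f μ := by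
    intro f hf hb
    exact Integrable.mono' (integrable_const 2) hf.aestronglyMeasurable
      (Filter.Eventually.of_forall hb)
  have hgi : Integrable g μ := by
    refine hbound g hgmeas fun x => ?_
    obtain ⟨h0, h1⟩ := hη01 x
    rw [hgeq]
    dsimp only
    split_ifs <;> rw [abs_le] <;> constructor <;> linarith
  have hmi : Integrable m μ := by
    refine hbound m hmmeas fun x => ?_
    obtain ⟨h0, h1⟩ := hη01 x
    rw [abs_le]
    rcases min_cases (η x) (1 - η x) with ⟨hq, _⟩ | ⟨hq, _⟩ <;>
      simp only [hm] <;> rw [hq] <;> constructor <;> linarith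
  have hei : Integrable e μ := by
    refine hbound e hemeas fun x => ?_
    obtain ⟨h0, h1⟩ := hη01 x
    rw [heeq]
    dsimp only
    rcases min_cases (η x) (1 - η x) with ⟨hq, _⟩ | ⟨hq, _⟩ <;> rw [hq] <;>
      split_ifs <;> rw [abs_le] <;> constructor <;> linarith
  have hindi : Integrable (A.indicator fun _ => (1 : ℝ)) μ :=
    (integrable_const (1 : ℝ)).indicator hAmeas
  -- pointwise inequality
  have hpt : ∀ x, g x - m x ≤ γ * A.indicator (fun _ => (1 : ℝ)) x + ζ₀ + e x := by
    intro x
    have hind0 : (0 : ℝ) ≤ A.indicator (fun _ => (1 : ℝ)) x :=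
      Set.indicator_nonneg (fun _ _ => zero_le_one) x
    rcases hx : h x with _ | b
    · have habs : 1 / 2 - m x = |η x - 1 / 2| := by
        rcases le_total (η x) (1 - η x) with h' | h'
        · rw [hm]; dsimp only; rw [min_eq_left h', abs_of_nonpos (by linarith)]; ring
        · rw [hm]; dsimp only; rw [min_eq_right h', abs_of_nonneg (by linarith)]; ring
      have hgx : g x = 1 / 2 := by simp [hg, hx]
      have hex : e x = 0 := by simp [he, hx]
      have hle : |η x - 1 / 2| ≤ γ := hproper hx
      rcases le_or_gt (|η x - 1 / 2|) ζ₀ with hc | hc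
      · rw [hgx, hex, habs]; nlinarith
      · have hxA : x ∈ A := ⟨hc, hle⟩
        rw [hgx, hex, habs, Set.indicator_of_mem hxA]
        linarith
    · have hgx : g x = if b then 1 - η x else η x := by simp [hg, hx]
      have hex : e x = (if b then 1 - η x else η x) - m x := by simp [he, hm, hx]
      rw [hgx, hex]
      nlinarith
  have hint : ∫ x, (g x - m x) ∂μ ≤
      ∫ x, (γ * A.indicator (fun _ => (1 : ℝ)) x + ζ₀ + e x) ∂μ := by
    refine integral_mono (hgi.sub hmi) (((hindi.const_mul γ).add (integrable_const ζ₀)).add hei)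
      hpt
  rw [integral_sub hgi hmi] at hint
  calc (∫ x, g x ∂μ) - ∫ x, m x ∂μ
      ≤ ∫ x, (γ * A.indicator (fun _ => (1 : ℝ)) x + ζ₀ + e x) ∂μ := hint
    _ = γ * (μ A).toReal + ζ₀ + ∫ x, e x ∂μ := by
        have h1 : Integrable (fun x => γ * A.indicator (fun _ => (1 : ℝ)) x + ζ₀) μ := by
          simpa using (hindi.const_mul γ).add (integrable_const ζ₀)
        rw [integral_add h1 hei]
        congr 1
        rw [integral_add (hindi.const_mul γ) (integrable_const ζ₀), integral_const_mul,
          integral_const, integral_indicator hAmeas]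
        simp [measure_univ, Measure.real]
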